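/- The matrix E' := I - P_Z^perp (I - E_WZ) equals the orthogonal projector onto the column space of D = [W Z]: E' = D (D^T D)^{-1} D^T. -/

import Mathlib

open Matrix

theorem Eprime_eq_orthogonal_projector {N P L : ℕ}
    (W : Matrix (Fin N) (Fin P) ℝ) (Z : Matrix (Fin N) (Fin L) ℝ)
    (hW : Wᵀ * W = 1) (hZ : Zᵀ * Z = 1)
    (hrank : (fromCols W Z).rank = P + L)
    (hY : IsUnit (Wᵀ * (1 - Z * Zᵀ) * W))
    (hD : IsUnit ((fromCols W Z)ᵀ * fromCols W Z)) :
    1 - (1 - Z * Zᵀ) * (1 - W * (Wᵀ * (1 - Z * Zᵀ) * W)⁻¹ * Wᵀ * (1 - Z * Zᵀ)) =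
      fromCols W Z * ((fromCols W Z)ᵀ * fromCols W Z)⁻¹ * (fromCols W Z)ᵀ := by
  have hYeq : Wᵀ * (1 - Z * Zᵀ) * W = 1 - (Wᵀ * Z) * (Zᵀ * W) := by
    simp [Matrix.mul_sub, Matrix.sub_mul, hW, Matrix.mul_assoc]
  have hM : (fromCols W Z)ᵀ * fromCols W Z
      = fromBlocks 1 (Wᵀ * Z) ((Wᵀ * Z)ᵀ) 1 := by
    rw [transpose_fromCols, fromRows_mul_fromCols, hW, hZ, transpose_mul,
      transpose_transpose]
  have hBt : (Wᵀ * Z)ᵀ = Zᵀ * W := by rw [transpose_mul, transpose_transpose]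
  -- invertibility instances
  rw [hYeq] at hY
  obtain ⟨iY⟩ := hY.nonempty_invertible
  letI := iY
  letI : Invertible (1 : Matrix (Fin L) (Fin L) ℝ) := invertibleOne
  haveI : Invertible ((1 : Matrix (Fin P) (Fin P) ℝ)
      - (Wᵀ * Z) * ⅟(1 : Matrix (Fin L) (Fin L) ℝ) * ((Wᵀ * Z)ᵀ)) := by
    rw [invOf_one, Matrix.mul_one, hBt]; exact iY
  rw [hM] at hD
  obtain ⟨iM⟩ := hD.nonempty_invertible
  letI := iM
  have hMinv : (fromBlocks 1 (Wᵀ * Z) ((Wᵀ * Z)ᵀ) 1)⁻¹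
      = fromBlocks (⅟(1 - (Wᵀ * Z) * (Zᵀ * W)))
          (-(⅟(1 - (Wᵀ * Z) * (Zᵀ * W)) * (Wᵀ * Z)))
          (-((Zᵀ * W) * ⅟(1 - (Wᵀ * Z) * (Zᵀ * W))))
          (1 + (Zᵀ * W) * ⅟(1 - (Wᵀ * Z) * (Zᵀ * W)) * (Wᵀ * Z)) := by
    rw [← invOf_eq_nonsing_inv, invOf_fromBlocks₂₂_eq]
    congr 1 <;> simp [hBt, Matrix.mul_assoc]
  have hYinv : (Wᵀ * (1 - Z * Zᵀ) * W)⁻¹ = ⅟(1 - (Wᵀ * Z) * (Zᵀ * W)) := by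
    rw [hYeq, ← invOf_eq_nonsing_inv]
  rw [hYinv, hM, hMinv, transpose_fromCols, fromCols_mul_fromBlocks,
    fromCols_mul_fromRows]
  simp only [Matrix.mul_one, Matrix.one_mul, Matrix.mul_add, Matrix.add_mul, Matrix.mul_neg,
    Matrix.neg_mul, Matrix.sub_mul, Matrix.mul_sub, Matrix.mul_assoc, sub_eq_add_neg]
  abel
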